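/- For every integer n ≥ 1, the n polynomials Σ_{i=1}^{n} Q_a^{[i;i]}(W,Z), for 0 ≤ a ≤ n−1, are linearly independent over the ring Q_n(2) = ℂ[Q₀,…,Q_n]: if R₀,…,R_{n−1} are polynomials in Q₀,…,Q_n with Σ_{a=0}^{n−1} R_a · (Σ_{i=1}^{n} Q_a^{[i;i]}) = 0 in ℂ[W,Z], then R_a = 0 for every a. -/

import Mathlib

set_option maxHeartbeats 1600000

noncomputable section

/-- Variables for polynomials in the entries of two `N × N` matrices `W` (`Sum.inl`) and
`Z` (`Sum.inr`). -/
abbrev WZVars (N : ℕ) := (Fin N × Fin N) ⊕ (Fin N × Fin N)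

/-- The polynomial `Q_a(W,Z)` defined by `det(W + λ Z) = Σ_a Q_a(W,Z) λ^a`. -/
def Qpoly (N a : ℕ) : MvPolynomial (WZVars N) ℂ :=
  Polynomial.coeff
    (Matrix.det (Matrix.of fun s t : Fin N =>
      Polynomial.C (MvPolynomial.X (Sum.inl (s, t))) +
        Polynomial.X * Polynomial.C (MvPolynomial.X (Sum.inr (s, t))))) a

/-- The polynomial `Q_a^{[i;i]}(W,Z)`: the coefficient of `λ^a` in the determinant of the
matrix obtained from `W + λ Z` (of size `n+1`) by deleting row `i` and column `i`. -/
def QpolyMinor (n : ℕ) (i : Fin (n + 1)) (a : ℕ) : MvPolynomial (WZVars (n + 1)) ℂ :=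
  Polynomial.coeff
    (Matrix.det (Matrix.of fun s t : Fin n =>
      Polynomial.C (MvPolynomial.X (Sum.inl (i.succAbove s, i.succAbove t))) +
        Polynomial.X *
          Polynomial.C (MvPolynomial.X (Sum.inr (i.succAbove s, i.succAbove t))))) a

namespace Stmt9Aux

open MvPolynomial

/-- The row index of a variable. -/
def rowOf {N : ℕ} : WZVars N → Fin N := Sum.elim Prod.fst Prod.fst

/-- The substitution scaling all variables in row `s` (of both `W` and `Z`) by `c s`. -/
def psi {N : ℕ} (c : Fin N → ℂ) :
    MvPolynomial (WZVars N) ℂ →ₐ[ℂ] MvPolynomial (WZVars N) ℂ :=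
  MvPolynomial.aeval fun v => MvPolynomial.C (c (rowOf v)) * MvPolynomial.X v

lemma psi_coeff_det {N : ℕ} (c : Fin N → ℂ) {ι : Type} [Fintype ι] [DecidableEq ι]
    (σ : ι → Fin N) (a : ℕ) :
    psi c (Polynomial.coeff (Matrix.det (Matrix.of fun s t : ι =>
      Polynomial.C (MvPolynomial.X (Sum.inl (σ s, σ t))) +
        Polynomial.X * Polynomial.C (MvPolynomial.X (Sum.inr (σ s, σ t))))) a)
    = (MvPolynomial.C (∏ s, c (σ s)) : MvPolynomial (WZVars N) ℂ) *
      Polynomial.coeff (Matrix.det (Matrix.of fun s t : ι =>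
      Polynomial.C (MvPolynomial.X (Sum.inl (σ s, σ t))) +
        Polynomial.X * Polynomial.C (MvPolynomial.X (Sum.inr (σ s, σ t))))) a := by
  set M : Matrix ι ι (Polynomial (MvPolynomial (WZVars N) ℂ)) :=
    Matrix.of fun s t : ι =>
      Polynomial.C (MvPolynomial.X (Sum.inl (σ s, σ t))) +
        Polynomial.X * Polynomial.C (MvPolynomial.X (Sum.inr (σ s, σ t))) with hM
  have h1 : psi c (Polynomial.coeff (Matrix.det M) a)
      = Polynomial.coeff (Polynomial.map (psi c).toRingHom (Matrix.det M)) a := by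
    rw [Polynomial.coeff_map]; rfl
  have h2 : Polynomial.map (psi c).toRingHom (Matrix.det M)
      = Matrix.det (M.map (Polynomial.mapRingHom (psi c).toRingHom)) := by
    exact RingHom.map_det (Polynomial.mapRingHom (psi c).toRingHom) M
  have h3 : M.map (Polynomial.mapRingHom (psi c).toRingHom)
      = Matrix.of fun s t =>
          Polynomial.C (MvPolynomial.C (c (σ s))) * M s t := by
    ext s t
    simp only [Matrix.map_apply, hM, Matrix.of_apply, Polynomial.coe_mapRingHom,
      Polynomial.map_add, Polynomial.map_mul, Polynomial.map_C, Polynomial.map_X]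
    have hw : (psi c).toRingHom (MvPolynomial.X (Sum.inl (σ s, σ t)))
        = MvPolynomial.C (c (σ s)) * MvPolynomial.X (Sum.inl (σ s, σ t)) := by
      simp [psi, rowOf]
    have hz : (psi c).toRingHom (MvPolynomial.X (Sum.inr (σ s, σ t)))
        = MvPolynomial.C (c (σ s)) * MvPolynomial.X (Sum.inr (σ s, σ t)) := by
      simp [psi, rowOf]
    rw [hw, hz, Polynomial.C_mul, Polynomial.C_mul]
    ring
  have h4 : Matrix.det (Matrix.of fun s t =>
        Polynomial.C (MvPolynomial.C (c (σ s))) * M s t)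
      = (∏ s, Polynomial.C (MvPolynomial.C (c (σ s)))) * Matrix.det M :=
    Matrix.det_mul_column _ M
  have h5 : (∏ s, Polynomial.C (MvPolynomial.C (c (σ s)))
        : Polynomial (MvPolynomial (WZVars N) ℂ))
      = Polynomial.C (MvPolynomial.C (∏ s, c (σ s))) := by
    rw [← map_prod, ← map_prod]
  rw [h1, h2, h3, h4, h5, Polynomial.coeff_C_mul]

lemma psi_Qpoly {N : ℕ} (c : Fin N → ℂ) (b : ℕ) :
    psi c (Qpoly N b) = MvPolynomial.C (∏ s, c s) * Qpoly N b := by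
  simpa [Qpoly] using psi_coeff_det c (fun s : Fin N => s) b

lemma psi_QpolyMinor {n : ℕ} (c : Fin (n + 1) → ℂ) (i : Fin (n + 1)) (a : ℕ) :
    psi c (QpolyMinor n i a)
      = MvPolynomial.C (∏ s : Fin n, c (i.succAbove s)) * QpolyMinor n i a := by
  simpa [QpolyMinor] using psi_coeff_det c i.succAbove a

end Stmt9Aux

open Stmt9Aux

theorem stmt9 (n : ℕ) (R : Fin (n + 1) → MvPolynomial (WZVars (n + 1)) ℂ)
    (hR : ∀ a : Fin (n + 1),
      R a ∈ Algebra.adjoin ℂ (Set.range fun b : Fin (n + 2) => Qpoly (n + 1) (b : ℕ)))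
    (h : ∑ a : Fin (n + 1), R a * (∑ i : Fin (n + 1), QpolyMinor n i (a : ℕ)) = 0) :
    ∀ a : Fin (n + 1), R a = 0 := by
  classical
  -- `psi c` fixes every `R a` when `∏ c = 1`
  have hfix : ∀ (c : Fin (n + 1) → ℂ), (∏ s, c s) = 1 → ∀ a, psi c (R a) = R a := by
    intro c hc a
    refine Algebra.adjoin_induction ?_ ?_ ?_ ?_ (hR a)
    · rintro x ⟨b, rfl⟩
      rw [psi_Qpoly, hc, map_one, one_mul]
    · intro r; exact (psi c).commutes r
    · intro x y _ _ ihx ihy; rw [map_add, ihx, ihy]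
    · intro x y _ _ ihx ihy; rw [map_mul, ihx, ihy]
  set β : Fin (n + 1) → MvPolynomial (WZVars (n + 1)) ℂ :=
    fun i => ∑ a : Fin (n + 1), R a * QpolyMinor n i (a : ℕ) with hβdef
  have hsum : ∑ i, β i = 0 := by
    calc ∑ i, β i = ∑ i, ∑ a : Fin (n + 1), R a * QpolyMinor n i (a : ℕ) := rfl
    _ = ∑ a : Fin (n + 1), ∑ i, R a * QpolyMinor n i (a : ℕ) := Finset.sum_comm
    _ = ∑ a : Fin (n + 1), R a * (∑ i, QpolyMinor n i (a : ℕ)) := by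
        refine Finset.sum_congr rfl fun a _ => ?_
        rw [Finset.mul_sum]
    _ = 0 := h
  have hβ0 : ∀ i, β i = 0 := by
    intro i
    set c : Fin (n + 1) → ℂ := fun s => if s = i then (2 : ℂ)⁻¹ ^ n else 2 with hcdef
    have hci : c i = (2 : ℂ)⁻¹ ^ n := if_pos rfl
    have hcne : ∀ s, s ≠ i → c s = 2 := fun s hs => if_neg hs
    have hwi : (∏ s : Fin n, c (i.succAbove s)) = 2 ^ n := by
      have : ∀ s : Fin n, c (i.succAbove s) = 2 := fun s => hcne _ (Fin.succAbove_ne i s)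
      simp [this]
    have hprod : ∏ s, c s = 1 := by
      rw [Fin.prod_univ_succAbove c i, hwi, hci, ← mul_pow]
      norm_num
    have hwj : ∀ j, j ≠ i → (∏ s : Fin n, c (j.succAbove s)) = 2⁻¹ := by
      intro j hj
      obtain ⟨s₀, hs₀⟩ := Fin.exists_succAbove_eq (show i ≠ j from hj.symm)
      have hn0 : n ≠ 0 := by rintro rfl; exact s₀.elim0
      rw [← Finset.mul_prod_erase Finset.univ _ (Finset.mem_univ s₀)]
      have h2 : ∀ s ∈ Finset.univ.erase s₀, c (j.succAbove s) = 2 := by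
        intro s hs
        refine hcne _ fun hcon => (Finset.mem_erase.mp hs).1 ?_
        exact Fin.succAbove_right_injective (hcon.trans hs₀.symm)
      rw [Finset.prod_congr rfl h2, Finset.prod_const, hs₀, hci,
        Finset.card_erase_of_mem (Finset.mem_univ s₀), Finset.card_univ, Fintype.card_fin]
      have hn : n - 1 + 1 = n := Nat.succ_pred_eq_of_pos (Nat.pos_of_ne_zero hn0)
      have h2n : (2 : ℂ) ^ n = 2 ^ (n - 1) * 2 := by rw [← pow_succ, hn]
      have : (2 : ℂ)⁻¹ ^ n * 2 ^ (n - 1) = ((2 : ℂ)⁻¹ ^ n * 2 ^ n) * 2⁻¹ := by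
        rw [h2n]; ring
      rw [this, ← mul_pow]
      norm_num
    have hpsi : psi c (∑ a : Fin (n + 1), R a * (∑ j : Fin (n + 1), QpolyMinor n j (a : ℕ)))
        = 0 := by rw [h, map_zero]
    rw [map_sum] at hpsi
    have hterm : ∀ a : Fin (n + 1), psi c (R a * ∑ j : Fin (n + 1), QpolyMinor n j (a : ℕ))
        = R a * ∑ j : Fin (n + 1),
            MvPolynomial.C (∏ s : Fin n, c (j.succAbove s)) * QpolyMinor n j (a : ℕ) := by
      intro a
      rw [map_mul, hfix c hprod, map_sum]
      congr 1
      exact Finset.sum_congr rfl fun j _ => psi_QpolyMinor c j (a : ℕ)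
    rw [Finset.sum_congr rfl (fun a _ => hterm a)] at hpsi
    have hre : ∑ a : Fin (n + 1), R a * ∑ j : Fin (n + 1),
          MvPolynomial.C (∏ s : Fin n, c (j.succAbove s)) * QpolyMinor n j (a : ℕ)
        = ∑ j : Fin (n + 1), MvPolynomial.C (∏ s : Fin n, c (j.succAbove s)) * β j := by
      simp_rw [Finset.mul_sum]
      rw [Finset.sum_comm]
      refine Finset.sum_congr rfl fun j _ => ?_
      rw [hβdef, Finset.mul_sum]
      exact Finset.sum_congr rfl fun a _ => by ring
    rw [hre, ← Finset.add_sum_erase _ _ (Finset.mem_univ i), hwi] at hpsi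
    have herase : ∑ j ∈ Finset.univ.erase i,
          MvPolynomial.C (∏ s : Fin n, c (j.succAbove s)) * β j
        = MvPolynomial.C ((2 : ℂ)⁻¹) * (-β i) := by
      have hco : ∀ j ∈ Finset.univ.erase i,
          MvPolynomial.C (∏ s : Fin n, c (j.succAbove s)) * β j
            = MvPolynomial.C ((2 : ℂ)⁻¹) * β j := by
        intro j hj
        rw [hwj j (Finset.mem_erase.mp hj).1]
      rw [Finset.sum_congr rfl hco, ← Finset.mul_sum]
      congr 1
      have := hsum
      rw [← Finset.add_sum_erase _ β (Finset.mem_univ i)] at this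
      linear_combination this
    rw [herase] at hpsi
    have hfactor : MvPolynomial.C ((2 : ℂ) ^ n - 2⁻¹) * β i = 0 := by
      rw [map_sub]
      linear_combination hpsi
    rcases mul_eq_zero.mp hfactor with hc0 | hb
    · exfalso
      have h2 : ((2 : ℂ) ^ n - 2⁻¹) = 0 := by
        exact (MvPolynomial.C_injective _ _) (by simpa using hc0)
      have h3 : (2 : ℂ) ^ (n + 1) = 1 := by
        rw [pow_succ]
        have : (2 : ℂ) ^ n = 2⁻¹ := by linear_combination h2
        rw [this]; norm_num
      have h4 : (2 : ℝ) ^ (n + 1) = 1 := by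
        simpa [norm_pow, Complex.norm_two] using congrArg (‖·‖) h3
      have h5 : (1 : ℝ) < 2 ^ (n + 1) := one_lt_pow₀ one_lt_two (Nat.succ_ne_zero n)
      linarith
    · exact hb
  -- Phase 2: Cramer
  set K : Matrix (Fin (n + 1)) (Fin (n + 1)) (MvPolynomial (WZVars (n + 1)) ℂ) :=
    Matrix.of fun i a => QpolyMinor n i ((a : Fin (n + 1)) : ℕ) with hK
  have hmul : K.mulVec R = 0 := by
    funext i
    have : K.mulVec R i = ∑ a : Fin (n + 1), QpolyMinor n i (a : ℕ) * R a := rfl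
    rw [this]
    have : ∑ a : Fin (n + 1), QpolyMinor n i (a : ℕ) * R a = β i :=
      Finset.sum_congr rfl fun a _ => mul_comm _ _
    rw [this, hβ0 i]; rfl
  have hdet : K.det ≠ 0 := by
    set χ : MvPolynomial (WZVars (n + 1)) ℂ →ₐ[ℂ] MvPolynomial (Fin (n + 1)) ℂ :=
      MvPolynomial.aeval (Sum.elim
        (fun p : Fin (n + 1) × Fin (n + 1) => if p.1 = p.2 then MvPolynomial.X p.1 else 0)
        (fun p : Fin (n + 1) × Fin (n + 1) => if p.1 = p.2 then (1 : MvPolynomial (Fin (n+1)) ℂ) else 0)) with hχ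
    set gp : Fin (n + 1) → Polynomial (MvPolynomial (Fin (n + 1)) ℂ) :=
      fun i => ∏ s : Fin n, (Polynomial.X + Polynomial.C (MvPolynomial.X (i.succAbove s)))
      with hgpdef
    have hgp : ∀ (i : Fin (n + 1)) (a : ℕ), χ (QpolyMinor n i a)
        = Polynomial.coeff (gp i) a := by
      intro i a
      rw [QpolyMinor]
      have hcm : χ (Polynomial.coeff (Matrix.det (Matrix.of fun s t : Fin n =>
          Polynomial.C (MvPolynomial.X (Sum.inl (i.succAbove s, i.succAbove t))) +
            Polynomial.X * Polynomial.C (MvPolynomial.X (Sum.inr (i.succAbove s, i.succAbove t))))) a)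
          = Polynomial.coeff (Polynomial.map χ.toRingHom (Matrix.det (Matrix.of fun s t : Fin n =>
          Polynomial.C (MvPolynomial.X (Sum.inl (i.succAbove s, i.succAbove t))) +
            Polynomial.X * Polynomial.C (MvPolynomial.X (Sum.inr (i.succAbove s, i.succAbove t)))))) a := by
        rw [Polynomial.coeff_map]; rfl
      rw [hcm]
      have hdm : Polynomial.map χ.toRingHom (Matrix.det (Matrix.of fun s t : Fin n =>
          Polynomial.C (MvPolynomial.X (Sum.inl (i.succAbove s, i.succAbove t))) +
            Polynomial.X * Polynomial.C (MvPolynomial.X (Sum.inr (i.succAbove s, i.succAbove t)))))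
          = Matrix.det ((Matrix.of fun s t : Fin n =>
          Polynomial.C (MvPolynomial.X (Sum.inl (i.succAbove s, i.succAbove t))) +
            Polynomial.X * Polynomial.C (MvPolynomial.X
              (Sum.inr (i.succAbove s, i.succAbove t)))).map
                (Polynomial.mapRingHom χ.toRingHom)) := by
        have := RingHom.map_det (Polynomial.mapRingHom χ.toRingHom)
          (Matrix.of fun s t : Fin n =>
            Polynomial.C (MvPolynomial.X (Sum.inl (i.succAbove s, i.succAbove t))) +
              Polynomial.X * Polynomial.C (MvPolynomial.X
                (Sum.inr (i.succAbove s, i.succAbove t))))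
        simpa [RingHom.mapMatrix_apply] using this
      rw [hdm]
      have hdiag : ((Matrix.of fun s t : Fin n =>
          Polynomial.C (MvPolynomial.X (Sum.inl (i.succAbove s, i.succAbove t))) +
            Polynomial.X * Polynomial.C (MvPolynomial.X
              (Sum.inr (i.succAbove s, i.succAbove t)))).map
                (Polynomial.mapRingHom χ.toRingHom))
          = Matrix.diagonal (fun s : Fin n =>
              Polynomial.X + Polynomial.C (MvPolynomial.X (i.succAbove s))) := by
        refine Matrix.ext fun s t => ?_
        by_cases hst : s = t
        · subst hst
          simp [Matrix.map_apply, hχ, add_comm]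
        · have hne : i.succAbove s ≠ i.succAbove t :=
            fun hcon => hst (Fin.succAbove_right_injective hcon)
          simp [Matrix.map_apply, hχ, hne, Matrix.diagonal_apply_ne _ hst]
      rw [hdiag, Matrix.det_diagonal, hgpdef]
    set V : Matrix (Fin (n + 1)) (Fin (n + 1)) (MvPolynomial (Fin (n + 1)) ℂ) :=
      Matrix.of fun a k : Fin (n + 1) => (-MvPolynomial.X k) ^ (a : ℕ) with hV
    have hdeg : ∀ i, (gp i).natDegree < n + 1 := by
      intro i
      refine lt_of_le_of_lt (Polynomial.natDegree_prod_le _ _) ?_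
      refine lt_of_le_of_lt (Finset.sum_le_card_nsmul _ _ 1 fun s _ => ?_) ?_
      · exact le_of_eq (Polynomial.natDegree_X_add_C _)
      · simp [Nat.lt_succ_iff]
    have hKV : (K.map χ) * V = Matrix.diagonal (fun i : Fin (n + 1) =>
        ∏ s : Fin n, (MvPolynomial.X (i.succAbove s) - MvPolynomial.X i)) := by
      refine Matrix.ext fun i k => ?_
      rw [Matrix.mul_apply]
      have hent : ∀ a : Fin (n + 1), (K.map χ) i a * V a k
          = (gp i).coeff (a : ℕ) * (-MvPolynomial.X k) ^ (a : ℕ) := by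
        intro a
        rw [Matrix.map_apply, hK, hV]
        simp only [Matrix.of_apply]
        rw [hgp]
      rw [Finset.sum_congr rfl fun a _ => hent a]
      have heval : ∑ a : Fin (n + 1), (gp i).coeff (a : ℕ) * (-MvPolynomial.X k) ^ (a : ℕ)
          = (gp i).eval (-MvPolynomial.X k) := by
        rw [Polynomial.eval_eq_sum_range' (hdeg i)]
        exact Fin.sum_univ_eq_sum_range (fun a => (gp i).coeff a * (-MvPolynomial.X k) ^ a) (n + 1)
      rw [heval, hgpdef]
      simp only [Polynomial.eval_prod, Polynomial.eval_add, Polynomial.eval_X, Polynomial.eval_C]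
      by_cases hki : k = i
      · subst hki
        rw [Matrix.diagonal_apply_eq]
        exact Finset.prod_congr rfl fun s _ => by ring
      · rw [Matrix.diagonal_apply_ne _ (fun hcon => hki hcon.symm)]
        obtain ⟨s₀, hs₀⟩ := Fin.exists_succAbove_eq (show k ≠ i from hki)
        refine Finset.prod_eq_zero (Finset.mem_univ s₀) ?_
        rw [hs₀]; ring
    intro h0
    have hmapdet : χ K.det = (K.map χ).det := AlgHom.map_det χ K
    have hdd := congrArg Matrix.det hKV
    rw [Matrix.det_mul, Matrix.det_diagonal, ← hmapdet, h0, map_zero, zero_mul] at hdd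
    have hne : (∏ i : Fin (n + 1), ∏ s : Fin n,
        (MvPolynomial.X (i.succAbove s) - MvPolynomial.X i : MvPolynomial (Fin (n + 1)) ℂ)) ≠ 0 := by
      refine Finset.prod_ne_zero_iff.mpr fun i _ => ?_
      refine Finset.prod_ne_zero_iff.mpr fun s _ => ?_
      refine sub_ne_zero.mpr fun hcon => ?_
      exact Fin.succAbove_ne i s (MvPolynomial.X_injective hcon)
    exact hne hdd.symm
  intro a
  have hsmul : K.det • R = 0 := by
    have h1 : (K.adjugate * K).mulVec R = 0 := by
      rw [← Matrix.mulVec_mulVec, hmul, Matrix.mulVec_zero]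
    rwa [Matrix.adjugate_mul, Matrix.smul_mulVec, Matrix.one_mulVec] at h1
  have h2 : K.det * R a = 0 := congrFun hsmul a
  exact (mul_eq_zero.mp h2).resolve_left hdet
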